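/- As k → 0 in ℝ³, the difference W^{(+)}(k) − exp(−(i/√3)(k₁·σx − k₂·σy + k₃·σz)) is O(‖k‖²), i.e. the matrix-valued function k ↦ W^{(+)}(k) − exp(−i·H⁺_W(k)) with H⁺_W(k) := (k₁σx − k₂σy + k₃σz)/√3 is big-O of ‖k‖² in a neighbourhood of k = 0. Hence in the small-momentum limit the Weyl cellular automaton recovers the right-handed Weyl equation. -/

import Mathlib

noncomputable section
open Matrix Asymptotics Filter

attribute [local instance] Matrix.normedAddCommGroup Matrix.normedSpace

/-- Pauli matrix σx. -/
def σx : Matrix (Fin 2) (Fin 2) ℂ := !![0, 1; 1, 0]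
/-- Pauli matrix σy. -/
def σy : Matrix (Fin 2) (Fin 2) ℂ := !![0, -Complex.I; Complex.I, 0]
/-- Pauli matrix σz. -/
def σz : Matrix (Fin 2) (Fin 2) ℂ := !![1, 0; 0, -1]

/-- The one-particle walk matrix `W^{(+)}(k)` of the (right-handed) Weyl cellular automaton. -/
def Wplus (k : EuclideanSpace ℝ (Fin 3)) : Matrix (Fin 2) (Fin 2) ℂ :=
  let c : Fin 3 → ℝ := fun j => Real.cos (k j / Real.sqrt 3)
  let sn : Fin 3 → ℝ := fun j => Real.sin (k j / Real.sqrt 3)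
  ((c 0 * c 1 * c 2 - sn 0 * sn 1 * sn 2 : ℝ) : ℂ) • (1 : Matrix (Fin 2) (Fin 2) ℂ)
    - (Complex.I * ((sn 0 * c 1 * c 2 + c 0 * sn 1 * sn 2 : ℝ) : ℂ)) • σx
    + (Complex.I * ((c 0 * sn 1 * c 2 - sn 0 * c 1 * sn 2 : ℝ) : ℂ)) • σy
    - (Complex.I * ((c 0 * c 1 * sn 2 + sn 0 * sn 1 * c 2 : ℝ) : ℂ)) • σz

/-- The Hamiltonian of the right-handed Weyl equation, `H⁺_W(k) = (k₁σx − k₂σy + k₃σz)/√3`. -/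
def HW (k : EuclideanSpace ℝ (Fin 3)) : Matrix (Fin 2) (Fin 2) ℂ :=
  ((Real.sqrt 3 : ℂ))⁻¹ • ((k 0 : ℂ) • σx - (k 1 : ℂ) • σy + (k 2 : ℂ) • σz)

/-! ### Auxiliary scalar estimates -/

lemma sin_approx {x : ℝ} (hx : |x| ≤ 1) : |Real.sin x - x| ≤ x ^ 2 := by
  have h := Real.sin_bound hx
  have h3 : |x| ^ 3 ≤ x ^ 2 := by
    have : |x| ^ 3 ≤ |x| ^ 2 := pow_le_pow_of_le_one (abs_nonneg x) hx (by norm_num)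
    simpa [sq_abs] using this
  have h4 : |x| ^ 4 ≤ x ^ 2 := by
    have : |x| ^ 4 ≤ |x| ^ 2 := pow_le_pow_of_le_one (abs_nonneg x) hx (by norm_num)
    simpa [sq_abs] using this
  have habs : |x ^ 3 / 6| ≤ x ^ 2 / 6 := by
    rw [abs_div, abs_pow]
    simp only [abs_of_nonneg (by norm_num : (0:ℝ) ≤ 6)]
    linarith
  calc |Real.sin x - x| = |(Real.sin x - (x - x ^ 3 / 6)) + (- x ^ 3 / 6)| := by ring_nf
    _ ≤ |Real.sin x - (x - x ^ 3 / 6)| + |(- x ^ 3 / 6)| := abs_add_le _ _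
    _ ≤ |x| ^ 4 * (5 / 96) + x ^ 2 / 6 := by
        rw [neg_div, abs_neg]; exact add_le_add (h.trans (by nlinarith [pow_le_pow_of_le_one (abs_nonneg x) hx (show 4 ≤ 5 by norm_num), pow_nonneg (abs_nonneg x) 4])) habs
    _ ≤ x ^ 2 := by nlinarith

lemma cos_approx {x : ℝ} (hx : |x| ≤ 1) : |Real.cos x - 1| ≤ x ^ 2 := by
  have h := Real.cos_bound hx
  have h4 : |x| ^ 4 ≤ x ^ 2 := by
    have : |x| ^ 4 ≤ |x| ^ 2 := pow_le_pow_of_le_one (abs_nonneg x) hx (by norm_num)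
    simpa [sq_abs] using this
  calc |Real.cos x - 1| = |(Real.cos x - (1 - x ^ 2 / 2)) + (- x ^ 2 / 2)| := by ring_nf
    _ ≤ |Real.cos x - (1 - x ^ 2 / 2)| + |(- x ^ 2 / 2)| := abs_add_le _ _
    _ ≤ |x| ^ 4 * (5 / 96) + x ^ 2 / 2 := by
        rw [neg_div, abs_neg, abs_div, abs_pow, sq_abs]
        gcongr <;> norm_num
    _ ≤ x ^ 2 := by nlinarith

lemma coscos {y z : ℝ} (hy : |y| ≤ 1) (hz : |z| ≤ 1) :
    |Real.cos y * Real.cos z - 1| ≤ y ^ 2 + z ^ 2 := by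
  have h1 := cos_approx hy
  have h2 := cos_approx hz
  have hcy : |Real.cos y| ≤ 1 := Real.abs_cos_le_one y
  calc |Real.cos y * Real.cos z - 1|
      = |Real.cos y * (Real.cos z - 1) + (Real.cos y - 1)| := by ring_nf
    _ ≤ |Real.cos y * (Real.cos z - 1)| + |Real.cos y - 1| := abs_add_le _ _
    _ ≤ 1 * |Real.cos z - 1| + |Real.cos y - 1| := by
        rw [abs_mul]; gcongr
    _ ≤ y ^ 2 + z ^ 2 := by nlinarith

lemma sincoscos {x y z m : ℝ} (hm : m ≤ 1) (hx : |x| ≤ m) (hy : |y| ≤ m) (hz : |z| ≤ m) :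
    |Real.sin x * Real.cos y * Real.cos z - x| ≤ 3 * m ^ 2 := by
  have hm0 : 0 ≤ m := le_trans (abs_nonneg x) hx
  have hx1 : |x| ≤ 1 := hx.trans hm
  have h1 := sin_approx hx1
  have h2 := coscos (hy.trans hm) (hz.trans hm)
  have hs : |Real.sin x| ≤ m := (Real.abs_sin_le_abs).trans hx
  have key : |Real.sin x * (Real.cos y * Real.cos z - 1)| ≤ m * (y ^ 2 + z ^ 2) := by
    rw [abs_mul]
    exact mul_le_mul hs h2 (abs_nonneg _) hm0
  have hx2 : x ^ 2 ≤ m ^ 2 := by nlinarith [abs_nonneg x, sq_abs x]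
  have hy2 : y ^ 2 ≤ m ^ 2 := by nlinarith [abs_nonneg y, sq_abs y]
  have hz2 : z ^ 2 ≤ m ^ 2 := by nlinarith [abs_nonneg z, sq_abs z]
  calc |Real.sin x * Real.cos y * Real.cos z - x|
      = |Real.sin x * (Real.cos y * Real.cos z - 1) + (Real.sin x - x)| := by ring_nf
    _ ≤ |Real.sin x * (Real.cos y * Real.cos z - 1)| + |Real.sin x - x| := abs_add_le _ _
    _ ≤ m * (y ^ 2 + z ^ 2) + x ^ 2 := add_le_add key h1
    _ ≤ 3 * m ^ 2 := by nlinarith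

lemma sinsin {x y w m : ℝ} (hx : |x| ≤ m) (hy : |y| ≤ m) (hw : |w| ≤ 1) :
    |Real.sin x * Real.sin y * w| ≤ m ^ 2 := by
  have hm0 : 0 ≤ m := le_trans (abs_nonneg x) hx
  have hsx : |Real.sin x| ≤ m := (Real.abs_sin_le_abs).trans hx
  have hsy : |Real.sin y| ≤ m := (Real.abs_sin_le_abs).trans hy
  rw [abs_mul, abs_mul]
  calc |Real.sin x| * |Real.sin y| * |w| ≤ m * m * 1 :=
        mul_le_mul (mul_le_mul hsx hsy (abs_nonneg _) hm0) hw (abs_nonneg _) (by nlinarith)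
    _ = m ^ 2 := by ring

lemma estd {x y z m : ℝ} (hm : m ≤ 1) (hx : |x| ≤ m) (hy : |y| ≤ m) (hz : |z| ≤ m) :
    |Real.cos x * Real.cos y * Real.cos z - Real.sin x * Real.sin y * Real.sin z - 1|
      ≤ 4 * m ^ 2 := by
  have hm0 : 0 ≤ m := le_trans (abs_nonneg x) hx
  have hx1 : |x| ≤ 1 := hx.trans hm
  have h1 : |Real.cos x * (Real.cos y * Real.cos z - 1)| ≤ y ^ 2 + z ^ 2 := by
    rw [abs_mul]
    calc |Real.cos x| * |Real.cos y * Real.cos z - 1| ≤ 1 * (y ^ 2 + z ^ 2) :=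
          mul_le_mul (Real.abs_cos_le_one x) (coscos (hy.trans hm) (hz.trans hm)) (abs_nonneg _)
            (by norm_num)
      _ = y ^ 2 + z ^ 2 := one_mul _
  have h2 := cos_approx hx1
  have h3 : |Real.sin x * Real.sin y * Real.sin z| ≤ m ^ 2 :=
    sinsin hx hy (Real.abs_sin_le_one z)
  have hx2 : x ^ 2 ≤ m ^ 2 := by nlinarith [abs_nonneg x, sq_abs x]
  have hy2 : y ^ 2 ≤ m ^ 2 := by nlinarith [abs_nonneg y, sq_abs y]
  have hz2 : z ^ 2 ≤ m ^ 2 := by nlinarith [abs_nonneg z, sq_abs z]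
  calc |Real.cos x * Real.cos y * Real.cos z - Real.sin x * Real.sin y * Real.sin z - 1|
      = |(Real.cos x * (Real.cos y * Real.cos z - 1) + (Real.cos x - 1))
          + (- (Real.sin x * Real.sin y * Real.sin z))| := by ring_nf
    _ ≤ |Real.cos x * (Real.cos y * Real.cos z - 1) + (Real.cos x - 1)|
          + |(- (Real.sin x * Real.sin y * Real.sin z))| := abs_add_le _ _
    _ ≤ (|Real.cos x * (Real.cos y * Real.cos z - 1)| + |Real.cos x - 1|)
          + |Real.sin x * Real.sin y * Real.sin z| := by
        rw [abs_neg]; exact add_le_add (abs_add_le _ _) le_rfl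
    _ ≤ ((y ^ 2 + z ^ 2) + x ^ 2) + m ^ 2 := add_le_add (add_le_add h1 h2) h3
    _ ≤ 4 * m ^ 2 := by nlinarith

lemma esta {x y z m : ℝ} (hm : m ≤ 1) (hx : |x| ≤ m) (hy : |y| ≤ m) (hz : |z| ≤ m) :
    |Real.sin x * Real.cos y * Real.cos z + Real.cos x * Real.sin y * Real.sin z - x|
      ≤ 4 * m ^ 2 := by
  have h1 := sincoscos hm hx hy hz
  have h2 : |Real.sin y * Real.sin z * Real.cos x| ≤ m ^ 2 :=
    sinsin hy hz (Real.abs_cos_le_one x)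
  calc |Real.sin x * Real.cos y * Real.cos z + Real.cos x * Real.sin y * Real.sin z - x|
      = |(Real.sin x * Real.cos y * Real.cos z - x) + Real.sin y * Real.sin z * Real.cos x| := by
        ring_nf
    _ ≤ |Real.sin x * Real.cos y * Real.cos z - x| + |Real.sin y * Real.sin z * Real.cos x| :=
        abs_add_le _ _
    _ ≤ 3 * m ^ 2 + m ^ 2 := add_le_add h1 h2
    _ = 4 * m ^ 2 := by ring

lemma estb {x y z m : ℝ} (hm : m ≤ 1) (hx : |x| ≤ m) (hy : |y| ≤ m) (hz : |z| ≤ m) :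
    |Real.cos x * Real.sin y * Real.cos z - Real.sin x * Real.cos y * Real.sin z - y|
      ≤ 4 * m ^ 2 := by
  have h1 := sincoscos hm hy hx hz
  have h2 : |Real.sin x * Real.sin z * Real.cos y| ≤ m ^ 2 :=
    sinsin hx hz (Real.abs_cos_le_one y)
  calc |Real.cos x * Real.sin y * Real.cos z - Real.sin x * Real.cos y * Real.sin z - y|
      = |(Real.sin y * Real.cos x * Real.cos z - y) + (- (Real.sin x * Real.sin z * Real.cos y))|
        := by ring_nf
    _ ≤ |Real.sin y * Real.cos x * Real.cos z - y| + |(- (Real.sin x * Real.sin z * Real.cos y))|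
        := abs_add_le _ _
    _ ≤ 3 * m ^ 2 + m ^ 2 := by rw [abs_neg]; exact add_le_add h1 h2
    _ = 4 * m ^ 2 := by ring

lemma estc {x y z m : ℝ} (hm : m ≤ 1) (hx : |x| ≤ m) (hy : |y| ≤ m) (hz : |z| ≤ m) :
    |Real.cos x * Real.cos y * Real.sin z + Real.sin x * Real.sin y * Real.cos z - z|
      ≤ 4 * m ^ 2 := by
  have h1 := sincoscos hm hz hx hy
  have h2 : |Real.sin x * Real.sin y * Real.cos z| ≤ m ^ 2 :=
    sinsin hx hy (Real.abs_cos_le_one z)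
  calc |Real.cos x * Real.cos y * Real.sin z + Real.sin x * Real.sin y * Real.cos z - z|
      = |(Real.sin z * Real.cos x * Real.cos y - z) + Real.sin x * Real.sin y * Real.cos z| := by
        ring_nf
    _ ≤ |Real.sin z * Real.cos x * Real.cos y - z| + |Real.sin x * Real.sin y * Real.cos z| :=
        abs_add_le _ _
    _ ≤ 3 * m ^ 2 + m ^ 2 := add_le_add h1 h2
    _ = 4 * m ^ 2 := by ring

/-! ### Matrix norm estimates -/

lemma norm_mul_le2 (M N : Matrix (Fin 2) (Fin 2) ℂ) : ‖M * N‖ ≤ 2 * (‖M‖ * ‖N‖) := by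
  have h0M : 0 ≤ ‖M‖ := norm_nonneg M
  have h0N : 0 ≤ ‖N‖ := norm_nonneg N
  rw [Matrix.norm_le_iff (by positivity)]
  intro i j
  have : (M * N) i j = M i 0 * N 0 j + M i 1 * N 1 j := by
    simp [Matrix.mul_apply, Fin.sum_univ_two]
  rw [this]
  calc ‖M i 0 * N 0 j + M i 1 * N 1 j‖ ≤ ‖M i 0 * N 0 j‖ + ‖M i 1 * N 1 j‖ := norm_add_le _ _
    _ = ‖M i 0‖ * ‖N 0 j‖ + ‖M i 1‖ * ‖N 1 j‖ := by rw [norm_mul, norm_mul]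
    _ ≤ ‖M‖ * ‖N‖ + ‖M‖ * ‖N‖ := by
        gcongr <;> exact Matrix.norm_entry_le_entrywise_sup_norm _
    _ = 2 * (‖M‖ * ‖N‖) := by ring

lemma norm_pow_le2 (A : Matrix (Fin 2) (Fin 2) ℂ) :
    ∀ n : ℕ, ‖A ^ (n + 1)‖ ≤ 2 ^ n * ‖A‖ ^ (n + 1) := by
  intro n
  induction n with
  | zero => simp
  | succ n ih =>
    have : A ^ (n + 2) = A ^ (n + 1) * A := by rw [pow_succ]
    rw [this]
    calc ‖A ^ (n + 1) * A‖ ≤ 2 * (‖A ^ (n + 1)‖ * ‖A‖) := norm_mul_le2 _ _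
      _ ≤ 2 * ((2 ^ n * ‖A‖ ^ (n + 1)) * ‖A‖) := by gcongr
      _ = 2 ^ (n + 1) * ‖A‖ ^ (n + 2) := by ring

lemma norm_one_le2 : ‖(1 : Matrix (Fin 2) (Fin 2) ℂ)‖ ≤ 1 := by
  rw [Matrix.norm_le_iff (by norm_num)]
  intro i j
  rcases eq_or_ne i j with h | h <;> simp [Matrix.one_apply, h]

lemma norm_σx_le : ‖σx‖ ≤ 1 := by
  rw [Matrix.norm_le_iff (by norm_num)]
  intro i j
  fin_cases i <;> fin_cases j <;> simp [σx]

lemma norm_σy_le : ‖σy‖ ≤ 1 := by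
  rw [Matrix.norm_le_iff (by norm_num)]
  intro i j
  fin_cases i <;> fin_cases j <;> simp [σy]

lemma norm_σz_le : ‖σz‖ ≤ 1 := by
  rw [Matrix.norm_le_iff (by norm_num)]
  intro i j
  fin_cases i <;> fin_cases j <;> simp [σz]

lemma norm_pow_le2' {A : Matrix (Fin 2) (Fin 2) ℂ} (hA : ‖A‖ ≤ 1) (n : ℕ) :
    ‖A ^ n‖ ≤ 2 ^ n := by
  cases n with
  | zero => simpa using norm_one_le2
  | succ n =>
    calc ‖A ^ (n + 1)‖ ≤ 2 ^ n * ‖A‖ ^ (n + 1) := norm_pow_le2 A n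
      _ ≤ 2 ^ n * 1 := by
          gcongr
          exact pow_le_one₀ (norm_nonneg A) hA
      _ ≤ 2 ^ (n + 1) := by norm_num [pow_succ]

/-- The constant in the exponential remainder bound. -/
def Cexp : ℝ := ∑' n : ℕ, (2 : ℝ) ^ (n + 1) / n.factorial

lemma Cexp_summable : Summable (fun n : ℕ => (2 : ℝ) ^ (n + 1) / n.factorial) := by
  have := (Real.summable_pow_div_factorial 2).mul_left 2
  convert this using 2 with n
  · rfl
  ring

lemma Cexp_nonneg : 0 ≤ Cexp := tsum_nonneg fun n => by positivity

lemma norm_term_le {A : Matrix (Fin 2) (Fin 2) ℂ} (hA : ‖A‖ ≤ 1) (n : ℕ) :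
    ‖((n.factorial : ℂ))⁻¹ • A ^ n‖ ≤ (2 : ℝ) ^ n / (n.factorial : ℝ) := by
  rw [norm_smul, norm_inv]
  have h1 : ‖((n.factorial : ℕ) : ℂ)‖ = (n.factorial : ℝ) := Complex.norm_natCast _
  rw [h1, div_eq_inv_mul]
  exact mul_le_mul_of_nonneg_left (norm_pow_le2' hA n) (by positivity)

lemma exp_taylor {A : Matrix (Fin 2) (Fin 2) ℂ} (hA : ‖A‖ ≤ 1) :
    ‖NormedSpace.exp A - 1 - A‖ ≤ Cexp * ‖A‖ ^ 2 := by
  have hgsum : Summable (fun n : ℕ => (2 : ℝ) ^ n / (n.factorial : ℝ)) :=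
    Real.summable_pow_div_factorial 2
  have hsum : Summable (fun n : ℕ => ((n.factorial : ℂ))⁻¹ • A ^ n) := by
    apply Summable.of_norm
    exact Summable.of_nonneg_of_le (fun n => norm_nonneg _) (norm_term_le hA) hgsum
  have hexp : NormedSpace.exp A = ∑' n : ℕ, ((n.factorial : ℂ))⁻¹ • A ^ n := by
    rw [NormedSpace.exp_eq_tsum ℂ]
  have hsum1 : Summable (fun n : ℕ => (((n+1).factorial : ℂ))⁻¹ • A ^ (n + 1)) :=
    (summable_nat_add_iff (f := fun n : ℕ => ((n.factorial : ℂ))⁻¹ • A ^ n) 1).mpr hsum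
  have hsum2 : Summable (fun n : ℕ => (((n+2).factorial : ℂ))⁻¹ • A ^ (n + 2)) :=
    (summable_nat_add_iff (f := fun n : ℕ => ((n.factorial : ℂ))⁻¹ • A ^ n) 2).mpr hsum
  have hsplit : NormedSpace.exp A - 1 - A
      = ∑' n : ℕ, (((n+2).factorial : ℂ))⁻¹ • A ^ (n + 2) := by
    rw [hexp, Summable.tsum_eq_zero_add hsum, Summable.tsum_eq_zero_add hsum1]
    simp [Nat.factorial]
  rw [hsplit]
  have hterm : ∀ n : ℕ, ‖(((n+2).factorial : ℂ))⁻¹ • A ^ (n + 2)‖ ≤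
      (2 : ℝ) ^ (n + 1) / (n.factorial : ℝ) * ‖A‖ ^ 2 := by
    intro n
    rw [norm_smul, norm_inv, Complex.norm_natCast]
    have h2 : ‖A ^ (n + 2)‖ ≤ 2 ^ (n + 1) * ‖A‖ ^ (n + 2) := norm_pow_le2 A (n + 1)
    have h3 : ‖A‖ ^ (n + 2) ≤ ‖A‖ ^ 2 := by
      calc ‖A‖ ^ (n + 2) = ‖A‖ ^ n * ‖A‖ ^ 2 := by ring
        _ ≤ 1 * ‖A‖ ^ 2 := by
            gcongr
            exact pow_le_one₀ (norm_nonneg A) hA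
        _ = ‖A‖ ^ 2 := one_mul _
    have h4 : (((n+2).factorial : ℝ))⁻¹ ≤ ((n.factorial : ℝ))⁻¹ := by
      apply inv_anti₀ (by positivity)
      exact_mod_cast Nat.factorial_le (by omega)
    have h5 : ‖A ^ (n + 2)‖ ≤ 2 ^ (n + 1) * ‖A‖ ^ 2 :=
      h2.trans (mul_le_mul_of_nonneg_left h3 (by positivity))
    calc (((n+2).factorial : ℝ))⁻¹ * ‖A ^ (n + 2)‖
        ≤ ((n.factorial : ℝ))⁻¹ * (2 ^ (n + 1) * ‖A‖ ^ 2) :=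
          mul_le_mul h4 h5 (norm_nonneg _) (by positivity)
      _ = (2 : ℝ) ^ (n + 1) / (n.factorial : ℝ) * ‖A‖ ^ 2 := by ring
  have hgsum2 : Summable (fun n : ℕ => (2 : ℝ) ^ (n + 1) / (n.factorial : ℝ) * ‖A‖ ^ 2) :=
    Cexp_summable.mul_right _
  have hnormsum : Summable (fun n : ℕ => ‖(((n+2).factorial : ℂ))⁻¹ • A ^ (n + 2)‖) :=
    Summable.of_nonneg_of_le (fun n => norm_nonneg _) hterm hgsum2
  calc ‖∑' n : ℕ, (((n+2).factorial : ℂ))⁻¹ • A ^ (n + 2)‖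
      ≤ ∑' n : ℕ, ‖(((n+2).factorial : ℂ))⁻¹ • A ^ (n + 2)‖ := norm_tsum_le_tsum_norm hnormsum
    _ ≤ ∑' n : ℕ, (2 : ℝ) ^ (n + 1) / (n.factorial : ℝ) * ‖A‖ ^ 2 :=
        Summable.tsum_le_tsum hterm hnormsum hgsum2
    _ = Cexp * ‖A‖ ^ 2 := by rw [Cexp, tsum_mul_right]

/-! ### The key algebraic identity -/

lemma key_identity (k : EuclideanSpace ℝ (Fin 3)) :
    Wplus k - 1 - (-Complex.I) • HW k =
      ((Real.cos (k 0 / Real.sqrt 3) * Real.cos (k 1 / Real.sqrt 3) * Real.cos (k 2 / Real.sqrt 3)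
          - Real.sin (k 0 / Real.sqrt 3) * Real.sin (k 1 / Real.sqrt 3)
            * Real.sin (k 2 / Real.sqrt 3) - 1 : ℝ) : ℂ) • (1 : Matrix (Fin 2) (Fin 2) ℂ)
      - (Complex.I * ((Real.sin (k 0 / Real.sqrt 3) * Real.cos (k 1 / Real.sqrt 3)
            * Real.cos (k 2 / Real.sqrt 3)
          + Real.cos (k 0 / Real.sqrt 3) * Real.sin (k 1 / Real.sqrt 3)
            * Real.sin (k 2 / Real.sqrt 3) - k 0 / Real.sqrt 3 : ℝ) : ℂ)) • σx
      + (Complex.I * ((Real.cos (k 0 / Real.sqrt 3) * Real.sin (k 1 / Real.sqrt 3)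
            * Real.cos (k 2 / Real.sqrt 3)
          - Real.sin (k 0 / Real.sqrt 3) * Real.cos (k 1 / Real.sqrt 3)
            * Real.sin (k 2 / Real.sqrt 3) - k 1 / Real.sqrt 3 : ℝ) : ℂ)) • σy
      - (Complex.I * ((Real.cos (k 0 / Real.sqrt 3) * Real.cos (k 1 / Real.sqrt 3)
            * Real.sin (k 2 / Real.sqrt 3)
          + Real.sin (k 0 / Real.sqrt 3) * Real.sin (k 1 / Real.sqrt 3)
            * Real.cos (k 2 / Real.sqrt 3) - k 2 / Real.sqrt 3 : ℝ) : ℂ)) • σz := by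
  have h3 : (Real.sqrt 3 : ℝ) ≠ 0 := by positivity
  ext i j
  fin_cases i <;> fin_cases j <;>
    simp [Wplus, HW, σx, σy, σz, Matrix.one_apply] <;> push_cast <;>
    field_simp <;> ring

/-! ### Coordinate and Hamiltonian bounds -/

lemma coord_le_norm (k : EuclideanSpace ℝ (Fin 3)) (j : Fin 3) : |k j| ≤ ‖k‖ := by
  rw [EuclideanSpace.norm_eq]
  have h1 : |k j| = Real.sqrt (‖k j‖ ^ 2) := by
    rw [Real.sqrt_sq_eq_abs, Real.norm_eq_abs, abs_abs]
  rw [h1]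
  apply Real.sqrt_le_sqrt
  exact Finset.single_le_sum (f := fun i => ‖k i‖ ^ 2) (fun i _ => sq_nonneg _)
    (Finset.mem_univ j)

lemma norm_A_le (k : EuclideanSpace ℝ (Fin 3)) : ‖(-Complex.I) • HW k‖ ≤ 3 * ‖k‖ := by
  have h1 : (1 : ℝ) ≤ Real.sqrt 3 := by
    rw [show (1:ℝ) = Real.sqrt 1 by simp]
    exact Real.sqrt_le_sqrt (by norm_num)
  have hs : ‖((Real.sqrt 3 : ℂ))⁻¹‖ ≤ 1 := by
    rw [norm_inv, Complex.norm_real, Real.norm_eq_abs, abs_of_nonneg (Real.sqrt_nonneg 3)]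
    rw [inv_le_one_iff₀]
    right; exact h1
  have hterm : ∀ (c : ℝ) (M : Matrix (Fin 2) (Fin 2) ℂ), ‖M‖ ≤ 1 →
      ‖(c : ℂ) • M‖ ≤ |c| := by
    intro c M hM
    rw [norm_smul, Complex.norm_real, Real.norm_eq_abs]
    calc |c| * ‖M‖ ≤ |c| * 1 := mul_le_mul_of_nonneg_left hM (abs_nonneg c)
      _ = |c| := mul_one _
  have h2 : ‖(k 0 : ℂ) • σx - (k 1 : ℂ) • σy + (k 2 : ℂ) • σz‖
      ≤ |k 0| + |k 1| + |k 2| := by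
    calc ‖(k 0 : ℂ) • σx - (k 1 : ℂ) • σy + (k 2 : ℂ) • σz‖
        ≤ ‖(k 0 : ℂ) • σx - (k 1 : ℂ) • σy‖ + ‖(k 2 : ℂ) • σz‖ := norm_add_le _ _
      _ ≤ (‖(k 0 : ℂ) • σx‖ + ‖(k 1 : ℂ) • σy‖) + ‖(k 2 : ℂ) • σz‖ := by
          gcongr
          exact norm_sub_le _ _
      _ ≤ (|k 0| + |k 1|) + |k 2| := by
          gcongr
          · exact hterm _ _ norm_σx_le
          · exact hterm _ _ norm_σy_le
          · exact hterm _ _ norm_σz_le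
  calc ‖(-Complex.I) • HW k‖ = ‖(-Complex.I)‖ * ‖HW k‖ := norm_smul _ _
    _ = ‖HW k‖ := by rw [norm_neg, Complex.norm_I, one_mul]
    _ = ‖((Real.sqrt 3 : ℂ))⁻¹‖ * ‖(k 0 : ℂ) • σx - (k 1 : ℂ) • σy + (k 2 : ℂ) • σz‖ := by
        rw [HW, norm_smul]
    _ ≤ 1 * (|k 0| + |k 1| + |k 2|) :=
        mul_le_mul hs h2 (norm_nonneg _) (by norm_num)
    _ = |k 0| + |k 1| + |k 2| := one_mul _
    _ ≤ ‖k‖ + ‖k‖ + ‖k‖ := by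
        gcongr <;> exact coord_le_norm k _
    _ = 3 * ‖k‖ := by ring

/-! ### Main theorem -/

/-- As `k → 0`, the difference `W^{(+)}(k) − exp(−i·H⁺_W(k))` is `O(‖k‖²)`:
in the small-momentum limit the Weyl cellular automaton recovers the right-handed
Weyl equation. -/
theorem weyl_automaton_recovers_weyl_equation :
    (fun k : EuclideanSpace ℝ (Fin 3) =>
        Wplus k - NormedSpace.exp ((-Complex.I) • HW k))
      =O[nhds (0 : EuclideanSpace ℝ (Fin 3))] (fun k => ‖k‖ ^ 2) := by
  rw [isBigO_iff]
  refine ⟨16 + Cexp * 9, ?_⟩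
  rw [Metric.eventually_nhds_iff]
  refine ⟨1/3, by norm_num, ?_⟩
  intro k hk
  rw [dist_zero_right] at hk
  have hk13 : ‖k‖ < 1/3 := hk
  have hm0 : (0:ℝ) ≤ ‖k‖ := norm_nonneg k
  have hk1 : ‖k‖ ≤ 1 := le_trans hk13.le (by norm_num)
  have hsqrt1 : (1 : ℝ) ≤ Real.sqrt 3 := by
    rw [show (1:ℝ) = Real.sqrt 1 by simp]
    exact Real.sqrt_le_sqrt (by norm_num)
  have hxj : ∀ j : Fin 3, |k j / Real.sqrt 3| ≤ ‖k‖ := by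
    intro j
    rw [abs_div, abs_of_nonneg (Real.sqrt_nonneg 3)]
    calc |k j| / Real.sqrt 3 ≤ |k j| / 1 := by gcongr
      _ = |k j| := div_one _
      _ ≤ ‖k‖ := coord_le_norm k j
  have hA3 : ‖(-Complex.I) • HW k‖ ≤ 3 * ‖k‖ := norm_A_le k
  have hA1 : ‖(-Complex.I) • HW k‖ ≤ 1 := by
    calc ‖(-Complex.I) • HW k‖ ≤ 3 * ‖k‖ := hA3
      _ ≤ 1 := by nlinarith
  have hdecomp : Wplus k - NormedSpace.exp ((-Complex.I) • HW k)
      = (Wplus k - 1 - (-Complex.I) • HW k)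
        - (NormedSpace.exp ((-Complex.I) • HW k) - 1 - (-Complex.I) • HW k) := by
    abel
  rw [hdecomp]
  have hsmul_norm : ∀ (c : ℝ) (M : Matrix (Fin 2) (Fin 2) ℂ), ‖M‖ ≤ 1 →
      ‖(Complex.I * (c : ℂ)) • M‖ ≤ |c| := by
    intro c M hM
    rw [norm_smul, norm_mul, Complex.norm_I, one_mul, Complex.norm_real, Real.norm_eq_abs]
    calc |c| * ‖M‖ ≤ |c| * 1 := mul_le_mul_of_nonneg_left hM (abs_nonneg c)
      _ = |c| := mul_one _
  have h1 : ‖Wplus k - 1 - (-Complex.I) • HW k‖ ≤ 16 * ‖k‖ ^ 2 := by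
    rw [key_identity]
    have hd := estd hk1 (hxj 0) (hxj 1) (hxj 2)
    have ha := esta hk1 (hxj 0) (hxj 1) (hxj 2)
    have hb := estb hk1 (hxj 0) (hxj 1) (hxj 2)
    have hc := estc hk1 (hxj 0) (hxj 1) (hxj 2)
    set α : ℝ := Real.cos (k 0 / Real.sqrt 3) * Real.cos (k 1 / Real.sqrt 3)
        * Real.cos (k 2 / Real.sqrt 3)
      - Real.sin (k 0 / Real.sqrt 3) * Real.sin (k 1 / Real.sqrt 3)
        * Real.sin (k 2 / Real.sqrt 3) - 1 with hα
    set β : ℝ := Real.sin (k 0 / Real.sqrt 3) * Real.cos (k 1 / Real.sqrt 3)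
        * Real.cos (k 2 / Real.sqrt 3)
      + Real.cos (k 0 / Real.sqrt 3) * Real.sin (k 1 / Real.sqrt 3)
        * Real.sin (k 2 / Real.sqrt 3) - k 0 / Real.sqrt 3 with hβ
    set γ : ℝ := Real.cos (k 0 / Real.sqrt 3) * Real.sin (k 1 / Real.sqrt 3)
        * Real.cos (k 2 / Real.sqrt 3)
      - Real.sin (k 0 / Real.sqrt 3) * Real.cos (k 1 / Real.sqrt 3)
        * Real.sin (k 2 / Real.sqrt 3) - k 1 / Real.sqrt 3 with hγ
    set δ : ℝ := Real.cos (k 0 / Real.sqrt 3) * Real.cos (k 1 / Real.sqrt 3)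
        * Real.sin (k 2 / Real.sqrt 3)
      + Real.sin (k 0 / Real.sqrt 3) * Real.sin (k 1 / Real.sqrt 3)
        * Real.cos (k 2 / Real.sqrt 3) - k 2 / Real.sqrt 3 with hδ
    have hT1 : ‖((α : ℝ) : ℂ) • (1 : Matrix (Fin 2) (Fin 2) ℂ)‖ ≤ |α| := by
      rw [norm_smul, Complex.norm_real, Real.norm_eq_abs]
      calc |α| * ‖(1 : Matrix (Fin 2) (Fin 2) ℂ)‖ ≤ |α| * 1 :=
            mul_le_mul_of_nonneg_left norm_one_le2 (abs_nonneg α)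
        _ = |α| := mul_one _
    have hT2 : ‖(Complex.I * ((β : ℝ) : ℂ)) • σx‖ ≤ |β| := hsmul_norm β σx norm_σx_le
    have hT3 : ‖(Complex.I * ((γ : ℝ) : ℂ)) • σy‖ ≤ |γ| := hsmul_norm γ σy norm_σy_le
    have hT4 : ‖(Complex.I * ((δ : ℝ) : ℂ)) • σz‖ ≤ |δ| := hsmul_norm δ σz norm_σz_le
    calc ‖((α : ℝ) : ℂ) • (1 : Matrix (Fin 2) (Fin 2) ℂ) - (Complex.I * ((β : ℝ) : ℂ)) • σx
          + (Complex.I * ((γ : ℝ) : ℂ)) • σy - (Complex.I * ((δ : ℝ) : ℂ)) • σz‖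
        ≤ ‖((α : ℝ) : ℂ) • (1 : Matrix (Fin 2) (Fin 2) ℂ) - (Complex.I * ((β : ℝ) : ℂ)) • σx
          + (Complex.I * ((γ : ℝ) : ℂ)) • σy‖ + ‖(Complex.I * ((δ : ℝ) : ℂ)) • σz‖ :=
          norm_sub_le _ _
      _ ≤ (‖((α : ℝ) : ℂ) • (1 : Matrix (Fin 2) (Fin 2) ℂ) - (Complex.I * ((β : ℝ) : ℂ)) • σx‖
          + ‖(Complex.I * ((γ : ℝ) : ℂ)) • σy‖) + ‖(Complex.I * ((δ : ℝ) : ℂ)) • σz‖ := by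
          gcongr
          exact norm_add_le _ _
      _ ≤ ((‖((α : ℝ) : ℂ) • (1 : Matrix (Fin 2) (Fin 2) ℂ)‖
          + ‖(Complex.I * ((β : ℝ) : ℂ)) • σx‖)
          + ‖(Complex.I * ((γ : ℝ) : ℂ)) • σy‖) + ‖(Complex.I * ((δ : ℝ) : ℂ)) • σz‖ := by
          gcongr
          exact norm_sub_le _ _
      _ ≤ ((|α| + |β|) + |γ|) + |δ| := by
          gcongr
      _ ≤ ((4 * ‖k‖ ^ 2 + 4 * ‖k‖ ^ 2) + 4 * ‖k‖ ^ 2) + 4 * ‖k‖ ^ 2 := by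
          gcongr
      _ = 16 * ‖k‖ ^ 2 := by ring
  have h2 : ‖NormedSpace.exp ((-Complex.I) • HW k) - 1 - (-Complex.I) • HW k‖
      ≤ Cexp * 9 * ‖k‖ ^ 2 := by
    calc ‖NormedSpace.exp ((-Complex.I) • HW k) - 1 - (-Complex.I) • HW k‖
        ≤ Cexp * ‖(-Complex.I) • HW k‖ ^ 2 := exp_taylor hA1
      _ ≤ Cexp * (3 * ‖k‖) ^ 2 :=
          mul_le_mul_of_nonneg_left (pow_le_pow_left₀ (norm_nonneg _) hA3 2) Cexp_nonneg
      _ = Cexp * 9 * ‖k‖ ^ 2 := by ring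
  have hnorm : ‖(‖k‖ ^ 2 : ℝ)‖ = ‖k‖ ^ 2 := by
    rw [Real.norm_eq_abs, abs_of_nonneg (by positivity)]
  rw [hnorm]
  calc ‖(Wplus k - 1 - (-Complex.I) • HW k)
        - (NormedSpace.exp ((-Complex.I) • HW k) - 1 - (-Complex.I) • HW k)‖
      ≤ ‖Wplus k - 1 - (-Complex.I) • HW k‖
        + ‖NormedSpace.exp ((-Complex.I) • HW k) - 1 - (-Complex.I) • HW k‖ :=
        norm_sub_le _ _
    _ ≤ 16 * ‖k‖ ^ 2 + Cexp * 9 * ‖k‖ ^ 2 := add_le_add h1 h2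
    _ = (16 + Cexp * 9) * ‖k‖ ^ 2 := by ring
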